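/- Assume A and Ω¹ are finite-dimensional over k and let (M, ∇₀) be a hom-connection, i.e. ∇₀ : Hom_A(Ω¹, M) → M is k-linear with ∇₀(f·a) = ∇₀(f)·a + f(da), where (f·a)(ω) = f(aω). Define ∇̄ := −∇₀∘Υ : T → M. Then T is stable under the operation Σᵢ lᵢ⊗mᵢ ↦ Σᵢ (lᵢ·a)⊗mᵢ, and for all Σᵢ lᵢ⊗mᵢ ∈ T and a ∈ A: ∇̄(Σᵢ lᵢ⊗mᵢ)·a = ∇̄(Σᵢ (lᵢ·a)⊗mᵢ) + Σᵢ lᵢ(da)·mᵢ (i.e. ∇̄ is a connection in the left C-comodule M with respect to the coderivation λ = d*). -/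

import Mathlib

set_option linter.unusedSectionVars false

/-!
STATEMENT 7: `A`, `Ω¹` finite-dimensional, `(M, ∇₀)` a hom-connection.  With
`T = L □_C M ⊆ L ⊗ M` and `Υ : T ≃ Hom_A(Ω¹, M)` as in Statement 6, set
`∇̄ := −∇₀∘Υ`.  Then `T` is stable under `Σ lᵢ⊗mᵢ ↦ Σ (lᵢ·a)⊗mᵢ` and
`∇̄(Σ lᵢ⊗mᵢ)·a = ∇̄(Σ (lᵢ·a)⊗mᵢ) + Σ lᵢ(da)·mᵢ`, i.e. `∇̄` is a connection in the
left `C = A*`-comodule `M` for the coderivation `λ = d*`.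
-/

open MulOpposite TensorProduct

noncomputable section

variable {k A Ω M : Type*} [Field k] [Ring A] [Algebra k A]
  [AddCommGroup Ω] [Module k Ω] [Module A Ω] [Module Aᵐᵒᵖ Ω]
  [SMulCommClass A Aᵐᵒᵖ Ω] [SMulCommClass Aᵐᵒᵖ k Ω] [SMulCommClass A k Ω]
  [IsScalarTower k Aᵐᵒᵖ Ω]
  [AddCommGroup M] [Module k M] [Module Aᵐᵒᵖ M]
  [SMulCommClass Aᵐᵒᵖ k M] [IsScalarTower k Aᵐᵒᵖ M]

/-- The left `A`-action on `L = Hom_k(Ω¹, k)`: `(a·l)(ω) := l(ωa)`. -/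
def aL (a : A) : (Ω →ₗ[k] k) →ₗ[k] (Ω →ₗ[k] k) :=
  (DistribMulAction.toLinearMap k Ω (op a)).dualMap

/-- The right `A`-action on `L = Hom_k(Ω¹, k)`: `(l·a)(ω) := l(aω)`. -/
def raL (a : A) : (Ω →ₗ[k] k) →ₗ[k] (Ω →ₗ[k] k) :=
  (DistribMulAction.toLinearMap k Ω a).dualMap

/-- The right `A`-action on `M` as a `k`-linear endomorphism. -/
def mR (a : A) : M →ₗ[k] M := DistribMulAction.toLinearMap k M (op a)

/-- The cotensor product `T = L □_C M ⊆ L ⊗_k M`. -/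
def cotensor : Submodule k ((Ω →ₗ[k] k) ⊗[k] M) :=
  ⨅ a : A, LinearMap.ker
    ((@HSub.hSub _ _ _ (@instHSub _ (@LinearMap.instSub _ _ _ _ _ _ _ TensorProduct.addCommGroup _ _ _))
      (TensorProduct.map (aL (k := k) (Ω := Ω) a) (LinearMap.id : M →ₗ[k] M))
      (TensorProduct.map (LinearMap.id : (Ω →ₗ[k] k) →ₗ[k] (Ω →ₗ[k] k))
        (mR (k := k) (M := M) a)) :
      (Ω →ₗ[k] k) ⊗[k] M →ₗ[k] (Ω →ₗ[k] k) ⊗[k] M))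

/-- The operation `Σ lᵢ⊗mᵢ ↦ Σ (lᵢ·a)⊗mᵢ` on `L ⊗ M`. -/
def tsm (a : A) : (Ω →ₗ[k] k) ⊗[k] M →ₗ[k] (Ω →ₗ[k] k) ⊗[k] M :=
  TensorProduct.map (raL (k := k) (Ω := Ω) a) (LinearMap.id : M →ₗ[k] M)

lemma dualTensorHom_map_aL (a : A) (t : (Ω →ₗ[k] k) ⊗[k] M) (ω : Ω) :
    dualTensorHom k Ω M
        (TensorProduct.map (aL (k := k) (Ω := Ω) a) (LinearMap.id : M →ₗ[k] M) t) ω =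
      dualTensorHom k Ω M t (op a • ω) := by
  induction t using TensorProduct.induction_on with
  | zero => simp
  | tmul l m => simp [aL, dualTensorHom_apply, DistribMulAction.toLinearMap]
  | add x y hx hy => simp [map_add, hx, hy]

lemma dualTensorHom_map_mR (a : A) (t : (Ω →ₗ[k] k) ⊗[k] M) (ω : Ω) :
    dualTensorHom k Ω M
        (TensorProduct.map (LinearMap.id : (Ω →ₗ[k] k) →ₗ[k] (Ω →ₗ[k] k))
          (mR (k := k) (M := M) a) t) ω =
      op a • dualTensorHom k Ω M t ω := by
  induction t using TensorProduct.induction_on with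
  | zero => simp
  | tmul l m =>
      simp only [TensorProduct.map_tmul, LinearMap.id_coe, id_eq, dualTensorHom_apply, mR,
        DistribMulAction.toLinearMap, DistribSMul.toLinearMap_apply]
      exact smul_comm _ _ _
  | add x y hx hy => simp [map_add, hx, hy, smul_add]

/-- `Υ : T → Hom_A(Ω¹, M)`, `Υ(Σ lᵢ⊗mᵢ)(ω) = Σ lᵢ(ω)·mᵢ` (a right `A`-linear map). -/
def Upsilon (t : ↥(cotensor (k := k) (A := A) (Ω := Ω) (M := M))) : Ω →ₗ[Aᵐᵒᵖ] M where
  toFun ω := dualTensorHom k Ω M t.1 ω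
  map_add' x y := by simp
  map_smul' b ω := by
    have ht := t.2
    simp only [cotensor, Submodule.mem_iInf, LinearMap.mem_ker] at ht
    replace ht : ∀ a : A, TensorProduct.map (aL (k := k) (Ω := Ω) a) (LinearMap.id : M →ₗ[k] M) t.1 =
        TensorProduct.map LinearMap.id (mR (k := k) (M := M) a) t.1 := fun a => sub_eq_zero.1 (ht a)
    have h := congrArg (fun s => dualTensorHom k Ω M s ω) (ht b.unop)
    try simp only at h
    rw [dualTensorHom_map_aL, dualTensorHom_map_mR, op_unop] at h
    show dualTensorHom k Ω M t.1 (b • ω) = b • dualTensorHom k Ω M t.1 ω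
    exact h

/-- The right `A`-action on `Hom_A(Ω¹, M)`: `(f · a) ω := f (a • ω)`. -/
def rsmulHom (a : A) (f : Ω →ₗ[Aᵐᵒᵖ] M) : Ω →ₗ[Aᵐᵒᵖ] M where
  toFun ω := f (a • ω)
  map_add' x y := by simp [smul_add]
  map_smul' b ω := by
    haveI := SMulCommClass.symm A Aᵐᵒᵖ Ω
    show f (a • b • ω) = b • f (a • ω)
    rw [smul_comm a b ω, map_smul]

/-- A first-order differential calculus on `A`. -/
def IsFODC (d : A →ₗ[k] Ω) : Prop :=
  ∀ a b : A, d (a * b) = a • d b + op b • d a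

/-- A hom-connection. -/
def IsHomConnection (d : A →ₗ[k] Ω) (D : (Ω →ₗ[Aᵐᵒᵖ] M) → M) : Prop :=
  IsLinearMap k D ∧
    ∀ (f : Ω →ₗ[Aᵐᵒᵖ] M) (a : A), D (rsmulHom a f) = op a • D f + f (d a)

lemma dualTensorHom_tsm (a : A) (t : (Ω →ₗ[k] k) ⊗[k] M) (ω : Ω) :
    dualTensorHom k Ω M (tsm (k := k) (Ω := Ω) (M := M) a t) ω =
      dualTensorHom k Ω M t (a • ω) := by
  induction t using TensorProduct.induction_on with
  | zero => simp
  | tmul l m => simp [tsm, raL, dualTensorHom_apply, DistribMulAction.toLinearMap]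
  | add x y hx hy => simp [map_add, hx, hy]

lemma aL_comp_raL (a b : A) :
    (aL (k := k) (Ω := Ω) b).comp (raL a) = (raL a).comp (aL b) := by
  ext l ω
  simp [aL, raL, LinearMap.dualMap_apply, smul_comm, DistribMulAction.toLinearMap]

/-- For finite-dimensional `A`, `Ω¹` and a hom-connection `(M, ∇₀)`,
the subspace `T` is stable under `Σ lᵢ⊗mᵢ ↦ Σ (lᵢ·a)⊗mᵢ`, and `∇̄ = −∇₀∘Υ` satisfies
`∇̄(t)·a = ∇̄(t·a) + Σᵢ lᵢ(da)·mᵢ`, i.e. it is a connection in the left `C`-comodule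
`M` with respect to the coderivation `λ = d*`. -/
theorem comodule_connection_from_homConnection
    [FiniteDimensional k A] [FiniteDimensional k Ω]
    (d : A →ₗ[k] Ω) (hd : IsFODC d)
    (D : (Ω →ₗ[Aᵐᵒᵖ] M) → M) (hD : IsHomConnection d D) :
    (∀ (t : ↥(cotensor (k := k) (A := A) (Ω := Ω) (M := M))) (a : A),
        tsm (k := k) (Ω := Ω) (M := M) a t.1 ∈
          cotensor (k := k) (A := A) (Ω := Ω) (M := M)) ∧
    (∀ (t t' : ↥(cotensor (k := k) (A := A) (Ω := Ω) (M := M))) (a : A),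
        t'.1 = tsm (k := k) (Ω := Ω) (M := M) a t.1 →
        op a • (-(D (Upsilon t))) =
          -(D (Upsilon t')) + dualTensorHom k Ω M t.1 (d a)) := by
  constructor
  · intro t a
    have ht := t.2
    simp only [cotensor, Submodule.mem_iInf, LinearMap.mem_ker] at ht ⊢
    intro b
    have hcomm :
        ((@HSub.hSub _ _ _ (@instHSub _ (@LinearMap.instSub _ _ _ _ _ _ _ TensorProduct.addCommGroup _ _ _)) (TensorProduct.map (aL (k := k) (Ω := Ω) b) (LinearMap.id : M →ₗ[k] M))
          (TensorProduct.map LinearMap.id (mR (k := k) (M := M) b)))).comp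
            (tsm (k := k) (Ω := Ω) (M := M) a) =
        (tsm (k := k) (Ω := Ω) (M := M) a).comp
          ((@HSub.hSub _ _ _ (@instHSub _ (@LinearMap.instSub _ _ _ _ _ _ _ TensorProduct.addCommGroup _ _ _)) (TensorProduct.map (aL (k := k) (Ω := Ω) b) (LinearMap.id : M →ₗ[k] M))
            (TensorProduct.map LinearMap.id (mR (k := k) (M := M) b)))) := by
      apply TensorProduct.ext'
      intro l m
      have hc := LinearMap.congr_fun (aL_comp_raL (k := k) (Ω := Ω) a b) l
      simp only [LinearMap.comp_apply] at hc
      simp only [LinearMap.comp_apply, tsm, TensorProduct.map_tmul, LinearMap.id_coe, id_eq]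
      have hs : ∀ (f g : (Ω →ₗ[k] k) ⊗[k] M →ₗ[k] (Ω →ₗ[k] k) ⊗[k] M) (x : (Ω →ₗ[k] k) ⊗[k] M),
          (@HSub.hSub _ _ _ (@instHSub _ (@LinearMap.instSub _ _ _ _ _ _ _ TensorProduct.addCommGroup _ _ _)) f g) x =
            f x - g x := fun _ _ _ => rfl
      rw [hs, hs]
      simp [hc, map_sub]
    have := congrArg (fun f : _ →ₗ[k] _ => f t.1) hcomm
    simpa [ht b] using this
  · intro t t' a hEq
    have hU : Upsilon t' = rsmulHom a (Upsilon t) := by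
      ext ω
      show dualTensorHom k Ω M t'.1 ω = dualTensorHom k Ω M t.1 (a • ω)
      rw [hEq, dualTensorHom_tsm]
    have hda : Upsilon t (d a) = dualTensorHom k Ω M t.1 (d a) := rfl
    rw [hU, hD.2 (Upsilon t) a, ← hda, neg_add, smul_neg]
    abel

end
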